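/- arXiv:2106.11120 — 4 statements merged into one kernel-verified Lean document; each statement's English description precedes it below -/
import Mathlib

section
/- The function D_i(q) := ((d − q)/(d − 2q)) C_i(q) − ∫₀^q d/(d − 2x)² C_i(x) dx is strictly convex on [0, d/2) when C_i is convex, continuously differentiable, and strictly increasing with C_i(0) = 0. -/
open Set intervalIntegral

/-- D_i(q) := ((d−q)/(d−2q)) C_i(q) − ∫₀^q d/(d−2x)² C_i(x) dx is
strictly convex on [0, d/2) when C_i is convex, C¹, strictly increasing, C_i(0)=0. -/
theorem constructed_cost_strictly_convex (d : ℝ) (hd : 0 < d) (C : ℝ → ℝ)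
    (hC : ContDiff ℝ 1 C) (hconv : ConvexOn ℝ Set.univ C)
    (hmono : StrictMono C) (h0 : C 0 = 0)
    (D : ℝ → ℝ)
    (hD : ∀ q, D q = (d - q) / (d - 2 * q) * C q
      - ∫ x in (0 : ℝ)..q, d / (d - 2 * x) ^ 2 * C x) :
    StrictConvexOn ℝ (Set.Ico (0 : ℝ) (d / 2)) D := by
  have hCd : Differentiable ℝ C := hC.differentiable one_ne_zero
  have hdm : Monotone (deriv C) := fun x y hxy =>
    hconv.monotoneOn_deriv (fun z _ => hCd z) (mem_univ x) (mem_univ y) hxy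
  have hdpos : ∀ x, 0 < deriv C x := by
    intro x
    obtain ⟨c, hc, hceq⟩ := exists_deriv_eq_slope C (show x - 1 < x by linarith)
      (hCd.continuous.continuousOn) (hCd.differentiableOn)
    have hs : 0 < (C x - C (x-1)) / (x - (x-1)) :=
      div_pos (by linarith [hmono (show x - 1 < x by linarith)]) (by linarith)
    exact lt_of_lt_of_le (hceq ▸ hs) (hdm (le_of_lt hc.2))
  set U : Set ℝ := Set.Iio (d/2) with hU
  have hUopen : IsOpen U := isOpen_Iio
  set f : ℝ → ℝ := fun x => d / (d - 2 * x) ^ 2 * C x with hf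
  have hfc : ∀ x ∈ U, ContinuousAt f x := by
    intro x hx
    simp only [hU, mem_Iio] at hx
    apply ContinuousAt.mul _ hCd.continuous.continuousAt
    exact ContinuousAt.div continuousAt_const (by fun_prop) (pow_ne_zero 2 (by linarith))
  -- key: HasDerivAt D at every point of U
  have key : ∀ q ∈ U, HasDerivAt D ((d - q) / (d - 2 * q) * deriv C q) q := by
    intro q hq
    have hqlt : q < d / 2 := hq
    have hne : d - 2 * q ≠ 0 := ne_of_gt (by linarith : (0:ℝ) < d - 2 * q)
    have hg : HasDerivAt (fun x => (d - x) / (d - 2 * x)) (d / (d - 2 * q) ^ 2) q := by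
      have h1 : HasDerivAt (fun x => d - x) (-1) q := by
        simpa using (hasDerivAt_id q).const_sub d
      have h2 : HasDerivAt (fun x => d - 2 * x) (-2) q := by
        simpa using ((hasDerivAt_id q).const_mul 2).const_sub d
      have := h1.div h2 hne
      exact this.congr_deriv (by ring)
    have hgC : HasDerivAt (fun x => (d - x) / (d - 2 * x) * C x)
        (d / (d - 2 * q) ^ 2 * C q + (d - q) / (d - 2 * q) * deriv C q) q :=
      hg.mul (hCd q).hasDerivAt
    have hInt : IntervalIntegrable f MeasureTheory.volume 0 q := by
      apply ContinuousOn.intervalIntegrable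
      apply ContinuousOn.mono (continuousOn_of_forall_continuousAt hfc)
      intro x hxmem
      rcases le_total 0 q with h | h
      · rw [uIcc_of_le h] at hxmem; exact lt_of_le_of_lt hxmem.2 hqlt
      · rw [uIcc_of_ge h] at hxmem
        exact lt_of_le_of_lt hxmem.2 (by linarith)
    have hF : HasDerivAt (fun u => ∫ x in (0:ℝ)..u, f x) (f q) q :=
      integral_hasDerivAt_right hInt
        (ContinuousAt.stronglyMeasurableAtFilter hUopen hfc q hq) (hfc q hq)
    have : HasDerivAt D
        (d / (d - 2 * q) ^ 2 * C q + (d - q) / (d - 2 * q) * deriv C q - f q) q := by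
      have hDeq : D = fun x => (d - x) / (d - 2 * x) * C x - ∫ t in (0:ℝ)..x, f t :=
        funext hD
      rw [hDeq]
      exact hgC.sub hF
    convert this using 1
    simp only [hf]
    ring
  -- continuity of D on Ico
  have hsub : Set.Ico (0:ℝ) (d/2) ⊆ U := fun x hx => hx.2
  have hDc : ContinuousOn D (Set.Ico (0:ℝ) (d/2)) := fun x hx =>
    ((key x (hsub hx)).continuousAt).continuousWithinAt
  apply StrictMonoOn.strictConvexOn_of_deriv (convex_Ico _ _) hDc
  rw [interior_Ico]
  intro x hx y hy hxy
  have hxU : x ∈ U := hx.2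
  have hyU : y ∈ U := hy.2
  rw [(key x hxU).deriv, (key y hyU).deriv]
  have hdx : 0 < d - 2 * x := by have := hx.2; simp only [mem_Ioo] at hx; linarith [hx.2]
  have hdy : 0 < d - 2 * y := by simp only [mem_Ioo] at hy; linarith [hy.2]
  have hgx : 0 < (d - x) / (d - 2 * x) := div_pos (by linarith) hdx
  have hglt : (d - x) / (d - 2 * x) < (d - y) / (d - 2 * y) := by
    rw [div_lt_div_iff₀ hdx hdy]
    nlinarith [hx.1, hxy]
  calc (d - x) / (d - 2 * x) * deriv C x
      < (d - y) / (d - 2 * y) * deriv C x := by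
        exact mul_lt_mul_of_pos_right hglt (hdpos x)
    _ ≤ (d - y) / (d - 2 * y) * deriv C y :=
        mul_le_mul_of_nonneg_left (hdm hxy.le) (le_of_lt (lt_trans hgx hglt))
end

section
/- With the efficiency recovery mechanism, the modified profit of firm i as a function of b_i (with Σ_{j≠i} b_j = s > 0 fixed) is π_i†(b_i) = d² b_i/(s + b_i)² − C_i(d b_i/(s + b_i)) + d² b_i²/(2(s + b_i)² s) − φ d²/(2s), and its derivative with respect to b_i equals (d²/(s + b_i)²) · ( s/(s + b_i) − (s/d) · C_i'(d b_i/(s + b_i)) ). -/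
/-- With the mechanism, the modified profit
π_i†(b) = d²b/(s+b)² − C(db/(s+b)) + d²b²/(2(s+b)²s) − φd²/(2s)
has derivative (d²/(s+b)²)·( s/(s+b) − (s/d)·C'(db/(s+b)) ) for b ≥ 0. -/
theorem modified_profit_deriv (d s φ : ℝ) (hd : 0 < d) (hs : 0 < s)
    (C : ℝ → ℝ) (hC : ContDiff ℝ 1 C)
    (π : ℝ → ℝ)
    (hπ : ∀ b, π b = d ^ 2 * b / (s + b) ^ 2 - C (d * b / (s + b))
      + d ^ 2 * b ^ 2 / (2 * (s + b) ^ 2 * s) - φ * d ^ 2 / (2 * s)) :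
    ∀ b : ℝ, 0 ≤ b →
      HasDerivAt π
        (d ^ 2 / (s + b) ^ 2 *
          (s / (s + b) - s / d * deriv C (d * b / (s + b)))) b := by
  intro b hb
  have hsb : (0:ℝ) < s + b := by linarith
  have hsb' : s + b ≠ 0 := ne_of_gt hsb
  have hsum : HasDerivAt (fun x : ℝ => s + x) 1 b := by
    simpa using (hasDerivAt_id b).const_add s
  have hden : HasDerivAt (fun x : ℝ => (s + x)^2) (2*(s+b)) b := by
    have := hsum.fun_pow 2
    simpa using this
  have hu : HasDerivAt (fun x : ℝ => d * x / (s + x)) (d * s / (s+b)^2) b := by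
    have := ((hasDerivAt_id' b).const_mul d).fun_div hsum hsb'
    refine this.congr_deriv ?_
    field_simp
    ring
  have hC' : HasDerivAt C (deriv C (d*b/(s+b))) (d*b/(s+b)) :=
    ((hC.differentiable one_ne_zero) _).hasDerivAt
  have h2 : HasDerivAt (fun x : ℝ => C (d*x/(s+x)))
      (deriv C (d*b/(s+b)) * (d*s/(s+b)^2)) b := hC'.comp b hu
  have h1 : HasDerivAt (fun x : ℝ => d^2 * x / (s+x)^2) (d^2*(s-b)/(s+b)^3) b := by
    have := ((hasDerivAt_id' b).const_mul (d^2)).fun_div hden (pow_ne_zero 2 hsb')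
    refine this.congr_deriv ?_
    field_simp
    ring
  have h3 : HasDerivAt (fun x : ℝ => d^2 * x^2 / (2*(s+x)^2*s)) (d^2*b/(s+b)^3) b := by
    have hden3 : HasDerivAt (fun x : ℝ => 2*(s+x)^2*s) (2*(2*(s+b))*s) b := by
      have := (hden.const_mul 2).mul_const s
      convert this using 1
    have hnum3 : HasDerivAt (fun x : ℝ => d^2 * x^2) (d^2 * (2*b)) b := by
      have := (hasDerivAt_pow 2 b).const_mul (d^2)
      simpa using this
    have := hnum3.fun_div hden3 (by positivity)
    refine this.congr_deriv ?_
    field_simp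
    ring
  have h := ((h1.sub h2).add h3).sub_const (φ * d^2/(2*s))
  have hπeq : π = fun x => d ^ 2 * x / (s + x) ^ 2 - C (d * x / (s + x))
      + d ^ 2 * x ^ 2 / (2 * (s + x) ^ 2 * s) - φ * d ^ 2 / (2 * s) := funext hπ
  rw [hπeq]
  refine h.congr_deriv ?_
  field_simp
  ring
end

section
/- Suppose (b_i*, i ∈ N) with p = d/Σ_i b_i* > 0 satisfies, for every i, the variational inequality (p − C_i'(b_i* p))(b_i − b_i*) ≤ 0 for all b_i ≥ 0, and Σ_i b_i* p = d. Then the supplies q_i* = b_i* p form an optimal solution of the social cost minimization problem min Σ_i C_i(q_i) subject to q_i ≥ 0, Σ_i q_i = d. -/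
private lemma grad_ineq {f : ℝ → ℝ} (hf : ConvexOn ℝ Set.univ f)
    (hd : Differentiable ℝ f) (x y : ℝ) :
    deriv f x * (y - x) ≤ f y - f x := by
  rcases lt_trichotomy x y with h | h | h
  · have := hf.deriv_le_slope (Set.mem_univ x) (Set.mem_univ y) h (hd x)
    rw [slope_def_field] at this
    exact (le_div_iff₀ (sub_pos.2 h)).mp this
  · simp [h]
  · have := hf.slope_le_deriv (Set.mem_univ y) (Set.mem_univ x) h (hd x)
    rw [slope_def_field] at this
    have h2 := (div_le_iff₀ (sub_pos.2 h)).mp this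
    nlinarith [h2]

/-- If bids b* with p = d/Σ b* > 0 satisfy the variational inequality
(p − C_i'(b_i* p))(b_i − b_i*) ≤ 0 for all b_i ≥ 0 and each i, and Σ b_i* p = d,
then the supplies q_i* = b_i* p solve the social cost minimization problem. -/
theorem equilibrium_is_socially_optimal {ι : Type*} [Fintype ι]
    (d : ℝ) (hd : 0 < d) (C : ι → ℝ → ℝ)
    (hconv : ∀ i, ConvexOn ℝ Set.univ (C i))
    (hdiff : ∀ i, ContDiff ℝ 1 (C i))
    (hmono : ∀ i, StrictMono (C i)) (h0 : ∀ i, C i 0 = 0)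
    (bstar : ι → ℝ) (hb : ∀ i, 0 ≤ bstar i)
    (p : ℝ) (hpdef : p = d / ∑ i, bstar i) (hp : 0 < p)
    (hVI : ∀ i, ∀ b : ℝ, 0 ≤ b →
      (p - deriv (C i) (bstar i * p)) * (b - bstar i) ≤ 0)
    (hbal : ∑ i, bstar i * p = d) :
    ∀ q : ι → ℝ, (∀ i, 0 ≤ q i) → ∑ i, q i = d →
      ∑ i, C i (bstar i * p) ≤ ∑ i, C i (q i) := by
  intro q hq hqd
  -- key inequality per firm: p * (q i - bstar i * p) ≤ C i (q i) - C i (bstar i * p)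
  have key : ∀ i, p * (q i - bstar i * p) ≤ C i (q i) - C i (bstar i * p) := by
    intro i
    have hdf : Differentiable ℝ (C i) := (hdiff i).differentiable one_ne_zero
    have hgrad := grad_ineq (hconv i) hdf (bstar i * p) (q i)
    refine le_trans ?_ hgrad
    -- p * (q i - bstar i p) ≤ deriv (C i) (bstar i p) * (q i - bstar i p)
    have hvi := hVI i (q i / p) (div_nonneg (hq i) hp.le)
    have : (p - deriv (C i) (bstar i * p)) * (q i - bstar i * p) ≤ 0 := by
      have h2 : (p - deriv (C i) (bstar i * p)) * (q i / p - bstar i) * p ≤ 0 :=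
        mul_nonpos_of_nonpos_of_nonneg hvi hp.le
      have h3 : (q i / p - bstar i) * p = q i - bstar i * p := by
        field_simp
      calc (p - deriv (C i) (bstar i * p)) * (q i - bstar i * p)
          = (p - deriv (C i) (bstar i * p)) * (q i / p - bstar i) * p := by
            rw [mul_assoc, h3]
        _ ≤ 0 := h2
    nlinarith [this]
  have hsum : ∑ i, p * (q i - bstar i * p) ≤ ∑ i, (C i (q i) - C i (bstar i * p)) :=
    Finset.sum_le_sum (fun i _ => key i)
  have h1 : ∑ i, p * (q i - bstar i * p) = 0 := by
    rw [← Finset.mul_sum, Finset.sum_sub_distrib, hqd, hbal, sub_self, mul_zero]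
  have h2 : ∑ i, (C i (q i) - C i (bstar i * p)) =
      ∑ i, C i (q i) - ∑ i, C i (bstar i * p) := Finset.sum_sub_distrib _ _
  linarith [hsum, h1, h2]
end

section
/- Setting φ = ( Σ_i (q_i*)²/(d − q_i*) ) / ( d² Σ_i 1/(d − q_i*) ) makes the market self-sufficient at equilibrium: Σ_i Δπ_i = 0, where Δπ_i = ((q_i*)² − φ d²)/(2 Σ_{j≠i} b_j*). -/
/-- Setting φ = (Σ_i q_i*²/(d−q_i*)) / (d² Σ_i 1/(d−q_i*)) makes the
market self-sufficient: Σ_i Δπ_i = 0. -/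
theorem self_sufficiency {ι : Type*} [Fintype ι] [DecidableEq ι] [Nonempty ι]
    (d : ℝ) (hd : 0 < d) (bstar : ι → ℝ) (hb : ∀ i, 0 ≤ bstar i)
    (p : ℝ) (hpdef : p = d / ∑ j, bstar j) (hp : 0 < p)
    (qstar : ι → ℝ) (hq : ∀ i, qstar i = bstar i * p)
    (hbal : ∑ i, qstar i = d) (hqd : ∀ i, qstar i < d)
    (hs : ∀ i, 0 < ∑ j ∈ Finset.univ.erase i, bstar j)
    (φ : ℝ)
    (hφ : φ = (∑ i, (qstar i) ^ 2 / (d - qstar i))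
      / (d ^ 2 * ∑ i, 1 / (d - qstar i))) :
    ∑ i, ((qstar i) ^ 2 - φ * d ^ 2)
      / (2 * ∑ j ∈ Finset.univ.erase i, bstar j) = 0 := by
  have hp' : p ≠ 0 := ne_of_gt hp
  have hS : ∑ j, bstar j = d / p := by
    have hSne : (∑ j, bstar j) ≠ 0 := by
      intro h0
      rw [hpdef, h0, div_zero] at hp
      exact lt_irrefl 0 hp
    rw [hpdef]
    field_simp
  have herase : ∀ i, ∑ j ∈ Finset.univ.erase i, bstar j = (d - qstar i) / p := by
    intro i
    have := Finset.sum_erase_add Finset.univ bstar (Finset.mem_univ i)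
    have hbi : bstar i = qstar i / p := by rw [hq i]; field_simp
    have : (∑ j ∈ Finset.univ.erase i, bstar j) + qstar i / p = d / p := by
      rw [← hbi, this, hS]
    rw [sub_div]
    linarith [this]
  have hdq : ∀ i, 0 < d - qstar i := fun i => by linarith [hqd i]
  have hterm : ∀ i, ((qstar i) ^ 2 - φ * d ^ 2)
      / (2 * ∑ j ∈ Finset.univ.erase i, bstar j)
      = (p / 2) * ((qstar i) ^ 2 / (d - qstar i) - φ * d ^ 2 * (1 / (d - qstar i))) := by
    intro i
    rw [herase i]
    have := (hdq i).ne'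
    field_simp
  rw [Finset.sum_congr rfl (fun i _ => hterm i)]
  rw [← Finset.mul_sum, Finset.sum_sub_distrib, ← Finset.mul_sum]
  have hB : 0 < ∑ i, 1 / (d - qstar i) :=
    Finset.sum_pos (fun i _ => one_div_pos.mpr (hdq i)) Finset.univ_nonempty
  have : φ * d ^ 2 * ∑ i, 1 / (d - qstar i) = ∑ i, (qstar i) ^ 2 / (d - qstar i) := by
    rw [hφ]
    field_simp
  rw [this]
  ring
end
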